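/- Let r ∈ {0,…,5} and let ℓ*₁ ≥ ⋯ ≥ ℓ*_r satisfy 0.01 ≤ ℓ*_s ≤ 0.5+ε₁. Let χ = [a₁ − ε₁/2, a₂ + ε₁/2] ⊆ [0,1], let ρ > 0 and b₁, b₂ ∈ [0,1]. Assume one of the following conditions: (A) ℓ*₁+⋯+ℓ*_r ≤ a₂ and 1−ρ ≥ a₁; (B) for some k ∈ {2,…,r}, ℓ*₁+⋯+ℓ*_{k−1} ≤ a₂, ℓ*_k ≤ b₁ and 1−ρ−(r−k+1)b₁ ≥ a₁; (C) ℓ*₂+⋯+ℓ*_r ≤ a₂, ℓ*₁ ≤ b₂ and 1−ρ−b₂ ≥ a₁; (D) a₁ ≥ 0.5+ε₁, ℓ*₁+⋯+ℓ*_r ≤ 1−ρ−(2a₁−1), and ℓ*₁+⋯+ℓ*_k ∈ [1−a₂−(2a₁−1), a₂] for some k; (E) there exists S ⊆ {1,…,r} with ∑_{s∈S} ℓ*_s ∈ [a₁,a₂]. For conditions (A)–(D) additionally assume a₂ − a₁ ≥ β. Then: if {ℓ_i}_{i=1}^j ∈ Ξ⋆(ℓ*₁,…,ℓ*_r,β)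 and ℓ_i ≤ ρ for every i ∈ {1,…,j}, there exists I_χ ⊆ {1,…,j} with ∑_{i∈I_χ} ℓ_i ∈ χ. Alternatively, if some S ⊆ {1,…,r} satisfies ∑_{s∈S} ℓ*_s ∈ [a₁,a₂] and {ℓ_i}_{i=1}^j ∈ Ξ⋆⋆(ℓ*₁,…,ℓ*_r), then there exists I_χ ⊆ {1,…,j} with ∑_{i∈I_χ} ℓ_i ∈ χ. -/
import Mathlib


open scoped Classical BigOperators

noncomputable section

/-- Membership of the sequence `ℓ` in `Ξ⋆(ℓ*₁,…,ℓ*_r, β)`. -/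
def XiStar {r : ℕ} (ε : ℝ) (ℓstar : Fin r → ℝ) (β : ℝ) {j : ℕ} (ℓ : Fin j → ℝ) : Prop :=
  (∀ i, ℓ i ∈ Set.Icc (0 : ℝ) 1) ∧ (∑ i, ℓ i) = 1 ∧ j ≤ 10 ^ 20 ∧
  ∃ X : Fin r → Finset (Fin j),
    (∀ s t, s ≠ t → Disjoint (X s) (X t)) ∧
    (∀ s : Fin r, (∑ i ∈ X s, ℓ i) ∈
      Set.Icc (ℓstar s - ε / 10 ^ 100) (ℓstar s + ε / 10 ^ 100)) ∧
    ∃ E : Finset (Fin j), E.card ≤ 1 ∧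
      ∀ i : Fin j, (∀ s, i ∉ X s) → i ∉ E → ℓ i ≤ β + ε / 10 ^ 100

/-- Membership of the sequence `ℓ` in `Ξ⋆⋆(ℓ*₁,…,ℓ*_r)`. -/
def XiStarStar {r : ℕ} (ε : ℝ) (ℓstar : Fin r → ℝ) {j : ℕ} (ℓ : Fin j → ℝ) : Prop :=
  (∀ i, ℓ i ∈ Set.Icc (0 : ℝ) 1) ∧ (∑ i, ℓ i) = 1 ∧ j ≤ 10 ^ 20 ∧
  ∃ X : Fin r → Finset (Fin j),
    (∀ s t, s ≠ t → Disjoint (X s) (X t)) ∧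
    (∀ s : Fin r, (∑ i ∈ X s, ℓ i) ∈
      Set.Icc (ℓstar s - ε / 10 ^ 100) (ℓstar s + ε / 10 ^ 100))

lemma greedy_aux {j : ℕ} (ℓ : Fin j → ℝ) (L H c : ℝ) (hc : c ≤ H - L) :
    ∀ T B : Finset (Fin j), Disjoint B T →
      (∀ i ∈ T, ℓ i ≤ c) → (∑ i ∈ B, ℓ i) ≤ H → L ≤ ∑ i ∈ B ∪ T, ℓ i →
      ∃ I : Finset (Fin j), (∑ i ∈ I, ℓ i) ∈ Set.Icc L H := by
  intro T
  induction T using Finset.induction_on with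
  | empty =>
      intro B _ _ hBH hL
      exact ⟨B, by simpa using hL, hBH⟩
  | @insert a T ha ih =>
      intro B hdisj hT hBH hL
      by_cases hB : L ≤ ∑ i ∈ B, ℓ i
      · exact ⟨B, hB, hBH⟩
      · push_neg at hB
        have haB : a ∉ B := fun h =>
          (Finset.disjoint_left.1 hdisj h) (Finset.mem_insert_self a T)
        have hdisj' : Disjoint (insert a B) T := by
          rw [Finset.disjoint_insert_left]
          exact ⟨ha, hdisj.mono_right (Finset.subset_insert a T)⟩
        have hsum' : (∑ i ∈ insert a B, ℓ i) = ℓ a + ∑ i ∈ B, ℓ i :=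
          Finset.sum_insert haB
        have hla : ℓ a ≤ c := hT a (Finset.mem_insert_self a T)
        have hBH' : (∑ i ∈ insert a B, ℓ i) ≤ H := by
          rw [hsum']; linarith
        have hunion : insert a B ∪ T = B ∪ insert a T := by
          rw [Finset.insert_union, Finset.union_insert]
        exact ih (insert a B) hdisj' (fun i hi => hT i (Finset.mem_insert_of_mem hi))
          hBH' (by rwa [hunion])

lemma exact_pick {r j : ℕ} (hr : r ≤ 5) (ε a₁ a₂ : ℝ) (hε : 0 < ε)
    (ℓs : Fin r → ℝ) (ℓ : Fin j → ℝ)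
    (X : Fin r → Finset (Fin j))
    (hXdisj : ∀ s t, s ≠ t → Disjoint (X s) (X t))
    (hXmem : ∀ s, (∑ i ∈ X s, ℓ i) ∈
      Set.Icc (ℓs s - ε / 10 ^ 100) (ℓs s + ε / 10 ^ 100))
    (S : Finset (Fin r)) (hS : (∑ s ∈ S, ℓs s) ∈ Set.Icc a₁ a₂) :
    ∃ Iχ : Finset (Fin j),
      (∑ i ∈ Iχ, ℓ i) ∈ Set.Icc (a₁ - ε / 10 ^ 5 / 2) (a₂ + ε / 10 ^ 5 / 2) := by
  refine ⟨S.biUnion X, ?_⟩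
  rw [Finset.sum_biUnion (fun s _ t _ hst => hXdisj s t hst)]
  have hcard : (S.card : ℝ) ≤ 5 := by
    exact_mod_cast le_trans (Finset.card_le_univ S) (by simpa using hr)
  have hub : (∑ s ∈ S, ∑ i ∈ X s, ℓ i) ≤ (∑ s ∈ S, ℓs s) + S.card * (ε / 10 ^ 100) := by
    have := Finset.sum_le_sum (fun s (_ : s ∈ S) => (hXmem s).2)
    rw [Finset.sum_add_distrib, Finset.sum_const, nsmul_eq_mul] at this
    linarith
  have hlb : (∑ s ∈ S, ℓs s) - S.card * (ε / 10 ^ 100) ≤ ∑ s ∈ S, ∑ i ∈ X s, ℓ i := by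
    have := Finset.sum_le_sum (fun s (_ : s ∈ S) => (hXmem s).1)
    rw [Finset.sum_sub_distrib, Finset.sum_const, nsmul_eq_mul] at this
    linarith
  have hδ : 5 * (ε / 10 ^ 100) ≤ ε / 10 ^ 5 / 2 := by
    linarith
  have hδ0 : 0 ≤ ε / 10 ^ 100 := by positivity
  have h1 : (S.card : ℝ) * (ε / 10 ^ 100) ≤ 5 * (ε / 10 ^ 100) := by nlinarith
  obtain ⟨hS1, hS2⟩ := hS
  exact ⟨by linarith, by linarith⟩

set_option maxHeartbeats 1000000 in
/-- **Lemma 6.1: combinations.**  With `ε₁ = ε/10⁵`, `χ = [a₁−ε₁/2, a₂+ε₁/2] ⊆ [0,1]`: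
under one of the conditions (A)–(E) (with the extra assumption `a₂ − a₁ ≥ β` for (A)–(D)),
every `{ℓᵢ} ∈ Ξ⋆(ℓ*₁,…,ℓ*_r,β)` with all `ℓᵢ ≤ ρ` has a subset summing into `χ`;
alternatively, under condition (E), every `{ℓᵢ} ∈ Ξ⋆⋆(ℓ*₁,…,ℓ*_r)` has a subset summing
into `χ`. -/
theorem lemma_combinations (ε : ℝ) (hε : 0 < ε) (r : ℕ) (hr : r ≤ 5)
    (ℓs : Fin r → ℝ)
    (hℓrange : ∀ i, 0.01 ≤ ℓs i ∧ ℓs i ≤ 0.5 + ε / 10 ^ 5)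
    (hmono : ∀ i k : Fin r, i ≤ k → ℓs k ≤ ℓs i)
    (a₁ a₂ ρ b₁ b₂ β : ℝ) (hρ : 0 < ρ)
    (hb₁ : b₁ ∈ Set.Icc (0 : ℝ) 1) (hb₂ : b₂ ∈ Set.Icc (0 : ℝ) 1)
    (hχ₀ : 0 ≤ a₁ - ε / 10 ^ 5 / 2) (hχ₁ : a₂ + ε / 10 ^ 5 / 2 ≤ 1) :
    ((((((∑ i, ℓs i) ≤ a₂ ∧ a₁ ≤ 1 - ρ) ∨
        (∃ kk : ℕ, 2 ≤ kk ∧ kk ≤ r ∧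
          (∑ i : Fin r, if (i : ℕ) < kk - 1 then ℓs i else 0) ≤ a₂ ∧
          (∀ i : Fin r, (i : ℕ) = kk - 1 → ℓs i ≤ b₁) ∧
          a₁ ≤ 1 - ρ - ((r : ℝ) - (kk : ℝ) + 1) * b₁) ∨
        ((∑ i : Fin r, if 1 ≤ (i : ℕ) then ℓs i else 0) ≤ a₂ ∧
          (∀ i : Fin r, (i : ℕ) = 0 → ℓs i ≤ b₂) ∧
          a₁ ≤ 1 - ρ - b₂) ∨
        (0.5 + ε / 10 ^ 5 ≤ a₁ ∧
          (∑ i, ℓs i) ≤ 1 - ρ - (2 * a₁ - 1) ∧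
          ∃ kk : ℕ, kk ≤ r ∧
            (∑ i : Fin r, if (i : ℕ) < kk then ℓs i else 0) ∈
              Set.Icc (1 - a₂ - (2 * a₁ - 1)) a₂)) ∧
        β ≤ a₂ - a₁) ∨
      (∃ S : Finset (Fin r), (∑ s ∈ S, ℓs s) ∈ Set.Icc a₁ a₂)) →
      ∀ (j : ℕ) (ℓ : Fin j → ℝ), XiStar ε ℓs β ℓ → (∀ i, ℓ i ≤ ρ) →
        ∃ Iχ : Finset (Fin j),
          (∑ i ∈ Iχ, ℓ i) ∈ Set.Icc (a₁ - ε / 10 ^ 5 / 2) (a₂ + ε / 10 ^ 5 / 2)) ∧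
    ((∃ S : Finset (Fin r), (∑ s ∈ S, ℓs s) ∈ Set.Icc a₁ a₂) →
      ∀ (j : ℕ) (ℓ : Fin j → ℝ), XiStarStar ε ℓs ℓ →
        ∃ Iχ : Finset (Fin j),
          (∑ i ∈ Iχ, ℓ i) ∈ Set.Icc (a₁ - ε / 10 ^ 5 / 2) (a₂ + ε / 10 ^ 5 / 2)) := by
  constructor
  · rintro (⟨hcond, hβ⟩ | ⟨S, hS⟩) j ℓ hXi hρ'
    swap
    · obtain ⟨hbound, hsum, hj, X, hXdisj, hXmem, _⟩ := hXi
      exact exact_pick hr ε a₁ a₂ hε ℓs ℓ X hXdisj hXmem S hS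
    obtain ⟨hbound, hsum, hj, X, hXdisj, hXmem, E, hEcard, hsmall⟩ := hXi
    -- notation
    have hδ0 : (0:ℝ) ≤ ε / 10 ^ 100 := by positivity
    have hδε : 10 * (ε / 10 ^ 100) ≤ ε / 10 ^ 5 / 2 := by linarith
    set U : Finset (Fin j) := Finset.univ.biUnion X with hU
    set T : Finset (Fin j) := Finset.univ \ (U ∪ E) with hT
    have hBsum : ∀ S : Finset (Fin r),
        (∑ i ∈ S.biUnion X, ℓ i) = ∑ s ∈ S, ∑ i ∈ X s, ℓ i :=
      fun S => Finset.sum_biUnion (fun s _ t _ hst => hXdisj s t hst)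
    have hcard5 : ∀ S : Finset (Fin r), (S.card : ℝ) ≤ 5 := by
      intro S
      exact_mod_cast le_trans (Finset.card_le_univ S) (by simpa using hr)
    have hblk_ub : ∀ S : Finset (Fin r),
        (∑ s ∈ S, ∑ i ∈ X s, ℓ i) ≤ (∑ s ∈ S, ℓs s) + 5 * (ε / 10 ^ 100) := by
      intro S
      have h := Finset.sum_le_sum (fun s (_ : s ∈ S) => (hXmem s).2)
      rw [Finset.sum_add_distrib, Finset.sum_const, nsmul_eq_mul] at h
      nlinarith [hcard5 S]
    have hblk_lb : ∀ S : Finset (Fin r),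
        (∑ s ∈ S, ℓs s) - 5 * (ε / 10 ^ 100) ≤ ∑ s ∈ S, ∑ i ∈ X s, ℓ i := by
      intro S
      have h := Finset.sum_le_sum (fun s (_ : s ∈ S) => (hXmem s).1)
      rw [Finset.sum_sub_distrib, Finset.sum_const, nsmul_eq_mul] at h
      nlinarith [hcard5 S]
    have hTsmall : ∀ i ∈ T, ℓ i ≤ β + ε / 10 ^ 100 := by
      intro i hi
      rw [hT, Finset.mem_sdiff, Finset.mem_union] at hi
      push_neg at hi
      obtain ⟨_, hiU, hiE⟩ := hi
      refine hsmall i (fun s hs => hiU ?_) hiE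
      exact Finset.mem_biUnion.2 ⟨s, Finset.mem_univ s, hs⟩
    have hdisjBT : ∀ S : Finset (Fin r), Disjoint (S.biUnion X) T := by
      intro S
      refine Finset.disjoint_left.2 (fun i hi hiT => ?_)
      rw [hT, Finset.mem_sdiff, Finset.mem_union] at hiT
      exact hiT.2 (Or.inl (Finset.biUnion_subset_biUnion_of_subset_left X
        (Finset.subset_univ S) hi))
    have hEρ : (∑ i ∈ E \ U, ℓ i) ≤ ρ := by
      calc (∑ i ∈ E \ U, ℓ i) ≤ (E \ U).card • ρ :=
            Finset.sum_le_card_nsmul _ _ _ (fun i _ => hρ' i)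
        _ ≤ 1 * ρ := by
            rw [nsmul_eq_mul]
            have : (E \ U).card ≤ 1 := le_trans (Finset.card_le_card (Finset.sdiff_subset)) hEcard
            have : ((E \ U).card : ℝ) ≤ 1 := by exact_mod_cast this
            nlinarith
        _ = ρ := one_mul ρ
    have hTeq : (∑ i ∈ T, ℓ i) = 1 - (∑ i ∈ E \ U, ℓ i) - ∑ s : Fin r, ∑ i ∈ X s, ℓ i := by
      rw [hT, Finset.sum_sdiff_eq_sub (Finset.subset_univ _), hsum]
      rw [← Finset.union_sdiff_self_eq_union, Finset.sum_union Finset.disjoint_sdiff]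
      rw [hU, hBsum Finset.univ]
      ring
    have hunion : ∀ S : Finset (Fin r),
        (∑ i ∈ S.biUnion X ∪ T, ℓ i) = (∑ s ∈ S, ∑ i ∈ X s, ℓ i) + ∑ i ∈ T, ℓ i := by
      intro S
      rw [Finset.sum_union (hdisjBT S), hBsum S]
    have hreach : ∀ S : Finset (Fin r),
        1 - ρ - (∑ s ∈ Sᶜ, ℓs s) - 10 * (ε / 10 ^ 100) ≤ ∑ i ∈ S.biUnion X ∪ T, ℓ i := by
      intro S
      rw [hunion S, hTeq]
      have h1 := hblk_ub Sᶜ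
      have h2 := hblk_lb S
      have h3 : (∑ s ∈ S, ∑ i ∈ X s, ℓ i) + ∑ s ∈ Sᶜ, ∑ i ∈ X s, ℓ i
          = ∑ s : Fin r, ∑ i ∈ X s, ℓ i := Finset.sum_add_sum_compl S _
      linarith
    have hgap : β + ε / 10 ^ 100 ≤ (a₂ + ε / 10 ^ 5 / 2) - (a₁ - ε / 10 ^ 5 / 2) := by
      linarith
    rcases hcond with ⟨hA1, hA2⟩ | ⟨kk, hkk2, hkkr, hBa₂, hBb₁, hBa₁⟩ |
      ⟨hC1, hC2, hC3⟩ | ⟨hD1, hD2, kk, hkkr, hDlo, hDhi⟩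
    · -- Condition A
      refine greedy_aux ℓ _ _ _ hgap T (Finset.univ.biUnion X) (hdisjBT _) hTsmall ?_ ?_
      · rw [hBsum]
        have := hblk_ub Finset.univ
        linarith
      · have := hreach Finset.univ
        rw [Finset.compl_univ, Finset.sum_empty] at this
        linarith
    · -- Condition B
      set S : Finset (Fin r) := Finset.univ.filter (fun i => (i : ℕ) < kk - 1) with hSdef
      have hSsum : (∑ s ∈ S, ℓs s) = ∑ i : Fin r, if (i : ℕ) < kk - 1 then ℓs i else 0 :=
        Finset.sum_filter _ _
      have hk1r : kk - 1 < r := by omega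
      set i₀ : Fin r := ⟨kk - 1, hk1r⟩ with hi₀
      have hScompl : Sᶜ = Finset.Ici i₀ := by
        ext i
        simp [hSdef, Fin.le_def, hi₀, Nat.not_lt]
      have hcardSc : (Sᶜ.card : ℝ) = (r : ℝ) - (kk : ℝ) + 1 := by
        rw [hScompl, Fin.card_Ici]
        have h1 : r - (i₀ : ℕ) = r - kk + 1 := by
          simp only [hi₀]
          omega
        rw [h1]
        push_cast [Nat.cast_sub (by omega : kk ≤ r)]
        ring
      have hSclb : (∑ s ∈ Sᶜ, ℓs s) ≤ ((r : ℝ) - (kk : ℝ) + 1) * b₁ := by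
        calc (∑ s ∈ Sᶜ, ℓs s) ≤ Sᶜ.card • b₁ := by
              refine Finset.sum_le_card_nsmul _ _ _ (fun i hi => ?_)
              rw [hScompl, Finset.mem_Ici] at hi
              exact le_trans (hmono i₀ i hi) (hBb₁ i₀ rfl)
          _ = ((r : ℝ) - (kk : ℝ) + 1) * b₁ := by rw [nsmul_eq_mul, hcardSc]
      refine greedy_aux ℓ _ _ _ hgap T (S.biUnion X) (hdisjBT _) hTsmall ?_ ?_
      · rw [hBsum]
        have := hblk_ub S
        rw [hSsum] at *
        linarith
      · have := hreach S
        linarith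
    · -- Condition C
      set S : Finset (Fin r) := Finset.univ.filter (fun i => 1 ≤ (i : ℕ)) with hSdef
      have hSsum : (∑ s ∈ S, ℓs s) = ∑ i : Fin r, if 1 ≤ (i : ℕ) then ℓs i else 0 :=
        Finset.sum_filter _ _
      have hSclb : (∑ s ∈ Sᶜ, ℓs s) ≤ b₂ := by
        have hmem : ∀ i ∈ Sᶜ, ℓs i ≤ b₂ := by
          intro i hi
          rw [Finset.mem_compl, hSdef, Finset.mem_filter] at hi
          push_neg at hi
          have h0 := hi (Finset.mem_univ i)
          exact hC2 i (by omega)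
        have hc1 : Sᶜ.card ≤ 1 := by
          refine Finset.card_le_one.2 (fun a ha b hb => ?_)
          rw [Finset.mem_compl, hSdef, Finset.mem_filter] at ha hb
          push_neg at ha hb
          have ha' := ha (Finset.mem_univ a)
          have hb' := hb (Finset.mem_univ b)
          exact Fin.ext (by omega)
        calc (∑ s ∈ Sᶜ, ℓs s) ≤ Sᶜ.card • b₂ :=
              Finset.sum_le_card_nsmul _ _ _ hmem
          _ ≤ 1 * b₂ := by
              rw [nsmul_eq_mul]
              have : ((Sᶜ.card : ℕ) : ℝ) ≤ 1 := by exact_mod_cast hc1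
              nlinarith [hb₂.1]
          _ = b₂ := one_mul b₂
      refine greedy_aux ℓ _ _ _ hgap T (S.biUnion X) (hdisjBT _) hTsmall ?_ ?_
      · rw [hBsum]
        have := hblk_ub S
        rw [hSsum] at *
        linarith
      · have := hreach S
        linarith
    · -- Condition D
      set S : Finset (Fin r) := Finset.univ.filter (fun i => (i : ℕ) < kk) with hSdef
      have hSsum : (∑ s ∈ S, ℓs s) = ∑ i : Fin r, if (i : ℕ) < kk then ℓs i else 0 :=
        Finset.sum_filter _ _
      have hScsum : (∑ s ∈ Sᶜ, ℓs s) = (∑ i, ℓs i) - ∑ s ∈ S, ℓs s := by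
        have := Finset.sum_add_sum_compl S ℓs
        linarith
      have hσub : (∑ i ∈ S.biUnion X, ℓ i) ≤ a₂ + 5 * (ε / 10 ^ 100) := by
        rw [hBsum]
        have := hblk_ub S
        rw [hSsum] at this
        linarith
      have hσlb : 1 - a₂ - (2 * a₁ - 1) - 5 * (ε / 10 ^ 100) ≤ ∑ i ∈ S.biUnion X, ℓ i := by
        rw [hBsum]
        have := hblk_lb S
        rw [hSsum] at this
        linarith
      have hTlb : 2 * a₁ - 1 - 10 * (ε / 10 ^ 100) ≤ ∑ i ∈ T, ℓ i := by
        rw [hTeq]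
        have h1 := hblk_ub Finset.univ
        have h2 : (∑ s ∈ Finset.univ, ℓs s) = ∑ i, ℓs i := rfl
        linarith
      have hreachD := hunion S
      by_cases hσ : 1 - a₁ + ε / 10 ^ 5 / 2 < ∑ i ∈ S.biUnion X, ℓ i
      · refine greedy_aux ℓ _ _ _ hgap T (S.biUnion X) (hdisjBT _) hTsmall ?_ ?_
        · linarith
        · rw [hreachD]
          rw [hBsum] at hσ
          linarith
      · push_neg at hσ
        have hgap' : β + ε / 10 ^ 100 ≤
            (1 - a₁ + ε / 10 ^ 5 / 2) - (1 - a₂ - ε / 10 ^ 5 / 2) := by linarith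
        obtain ⟨I, hI1, hI2⟩ := greedy_aux ℓ (1 - a₂ - ε / 10 ^ 5 / 2)
          (1 - a₁ + ε / 10 ^ 5 / 2) (β + ε / 10 ^ 100) hgap' T (S.biUnion X)
          (hdisjBT _) hTsmall (by linarith) (by rw [hreachD]; rw [hBsum] at hσlb; linarith)
        refine ⟨Iᶜ, ?_, ?_⟩
        · have := Finset.sum_add_sum_compl I ℓ
          rw [hsum] at this
          linarith
        · have := Finset.sum_add_sum_compl I ℓ
          rw [hsum] at this
          linarith
  · rintro ⟨S, hS⟩ j ℓ ⟨hbound, hsum, hj, X, hXdisj, hXmem⟩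
    exact exact_pick hr ε a₁ a₂ hε ℓs ℓ X hXdisj hXmem S hS
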